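/- Let Q_m be the Markov discretization operator on [0,1] as above. Then for every Lipschitz function f, |Q_m f − f|_∞ ≤ (5/(2m)) Lip(f). -/

import Mathlib

/-- The standard hat function `ψ_i` over the uniform partition `{i/m}` of `[0,1]`. -/
noncomputable def hat (m i : ℕ) (x : ℝ) : ℝ := max 0 (1 - |(m : ℝ) * x - (i : ℝ)|)

/-- The average of `f` over the cell `I_i = [(i-1)/m, i/m]`: `f_i = m ∫_{I_i} f dλ`. -/
noncomputable def cellAvg (m : ℕ) (f : ℝ → ℝ) (i : ℕ) : ℝ :=
  (m : ℝ) * ∫ x in (((i : ℝ) - 1) / (m : ℝ))..((i : ℝ) / (m : ℝ)), f x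

/-- The Markov (Ding–Li) discretization
`Q_m f = f_1 ψ_0 + ∑_{i=1}^{m-1} ((f_i + f_{i+1})/2) ψ_i + f_m ψ_m`. -/
noncomputable def Qm (m : ℕ) (f : ℝ → ℝ) (x : ℝ) : ℝ :=
  cellAvg m f 1 * hat m 0 x
    + (∑ i ∈ Finset.Ioo 0 m, ((cellAvg m f i + cellAvg m f (i + 1)) / 2) * hat m i x)
    + cellAvg m f m * hat m m x

lemma hat_nonneg (m i : ℕ) (x : ℝ) : 0 ≤ hat m i x := le_max_left _ _

lemma hat_eq_zero (m i : ℕ) (x : ℝ) (h : 1 ≤ |(m:ℝ) * x - i|) : hat m i x = 0 := by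
  unfold hat
  rw [max_eq_left]
  linarith

/-- Partition of unity for the hats. -/
lemma hat_sum (m : ℕ) (hm : 1 ≤ m) (x : ℝ) (hx : x ∈ Set.Icc (0:ℝ) 1) :
    ∑ i ∈ Finset.range (m+1), hat m i x = 1 := by
  have hm0 : (0:ℝ) < m := by exact_mod_cast hm
  set t := (m:ℝ) * x with ht
  have ht0 : 0 ≤ t := mul_nonneg hm0.le hx.1
  have htm : t ≤ m := by nlinarith [hx.2]
  set k : ℕ := min ⌊t⌋₊ (m-1) with hk
  have hk1 : (k:ℝ) ≤ t := by
    have : (k:ℝ) ≤ ⌊t⌋₊ := by exact_mod_cast Nat.cast_le.mpr (min_le_left _ _)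
    exact this.trans (Nat.floor_le ht0)
  have hkm : k + 1 ≤ m := by omega
  have hk2 : t ≤ (k:ℝ) + 1 := by
    rcases le_or_gt ⌊t⌋₊ (m-1) with h | h
    · have hkf : k = ⌊t⌋₊ := by omega
      rw [hkf]
      exact (Nat.lt_floor_add_one t).le
    · -- ⌊t⌋₊ ≥ m, so t ≥ m, so t = m, k = m-1
      have : (m:ℝ) ≤ t := by
        have h1 : m ≤ ⌊t⌋₊ := by omega
        have := Nat.floor_le ht0
        have : ((m:ℕ):ℝ) ≤ (⌊t⌋₊ : ℝ) := by exact_mod_cast h1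
        linarith [Nat.floor_le ht0]
      have hkf : k = m - 1 := by omega
      have : ((k:ℕ):ℝ) + 1 = m := by
        rw [hkf]; push_cast [Nat.cast_sub hm]; ring
      linarith
  have hsub : ({k, k+1} : Finset ℕ) ⊆ Finset.range (m+1) := by
    intro i hi
    simp only [Finset.mem_insert, Finset.mem_singleton] at hi
    rcases hi with rfl | rfl <;> simp [Finset.mem_range] <;> omega
  rw [← Finset.sum_subset hsub (fun i hi hni => ?_)]
  · rw [Finset.sum_pair (by omega)]
    have h1 : hat m k x = 1 - (t - k) := by
      unfold hat
      rw [← ht, abs_of_nonneg (by linarith), max_eq_right (by linarith)]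
    have h2 : hat m (k+1) x = 1 - ((k:ℝ) + 1 - t) := by
      unfold hat
      rw [← ht]
      push_cast
      rw [abs_of_nonpos (by linarith), max_eq_right (by linarith)]
      ring_nf
    rw [h1, h2]; ring
  · -- terms outside {k, k+1} vanish
    simp only [Finset.mem_insert, Finset.mem_singleton, not_or] at hni
    apply hat_eq_zero
    rw [← ht]
    rcases lt_or_gt_of_ne hni.1 with h | h
    · -- i < k, so i ≤ k-1, t - i ≥ k - i ≥ 1
      have : (i:ℝ) + 1 ≤ (k:ℝ) := by exact_mod_cast h
      rw [abs_of_nonneg (by linarith)]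
      linarith
    · -- i > k, i ≠ k+1, so i ≥ k+2
      have hi2 : k + 2 ≤ i := by omega
      have : (k:ℝ) + 2 ≤ (i:ℝ) := by exact_mod_cast hi2
      rw [abs_of_nonpos (by linarith)]
      linarith

/-- The cell average is within `L/(2m)` of the value at either endpoint of the cell. -/
lemma avg_close (m : ℕ) (hm : 1 ≤ m) (f : ℝ → ℝ) (L : ℝ) (hL : 0 ≤ L)
    (hlip : ∀ x ∈ Set.Icc (0:ℝ) 1, ∀ y ∈ Set.Icc (0:ℝ) 1, |f x - f y| ≤ L * |x - y|)
    (j : ℕ) (hj1 : 1 ≤ j) (hjm : j ≤ m) (p : ℝ)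
    (hp : p = ((j:ℝ) - 1) / m ∨ p = (j:ℝ) / m) :
    |cellAvg m f j - f p| ≤ L / (2 * m) := by
  have hm0 : (0:ℝ) < m := by exact_mod_cast hm
  set a : ℝ := ((j:ℝ) - 1) / m with ha
  set b : ℝ := (j:ℝ) / m with hb
  have hj1R : (1:ℝ) ≤ (j:ℝ) := by exact_mod_cast hj1
  have hjmR : (j:ℝ) ≤ (m:ℝ) := by exact_mod_cast hjm
  have hab : a ≤ b := by
    rw [ha, hb, div_le_div_iff₀ hm0 hm0]
    nlinarith
  have hba : b - a = 1 / m := by rw [ha, hb]; field_simp; ring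
  have ha0 : 0 ≤ a := div_nonneg (by linarith) hm0.le
  have hb1 : b ≤ 1 := by rw [hb, div_le_one hm0]; exact hjmR
  have hsub : Set.Icc a b ⊆ Set.Icc (0:ℝ) 1 := fun y hy =>
    ⟨ha0.trans hy.1, hy.2.trans hb1⟩
  have hp01 : p ∈ Set.Icc (0:ℝ) 1 := by
    rcases hp with rfl | rfl
    · exact ⟨ha0, (hab.trans hb1)⟩
    · exact ⟨le_trans ha0 hab, hb1⟩
  have hcont : ContinuousOn f (Set.Icc (0:ℝ) 1) := by
    have : LipschitzOnWith (Real.toNNReal L) f (Set.Icc (0:ℝ) 1) := by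
      rw [lipschitzOnWith_iff_dist_le_mul]
      intro u hu v hv
      have := hlip u hu v hv
      rw [Real.dist_eq, Real.dist_eq]
      calc |f u - f v| ≤ L * |u - v| := this
        _ ≤ Real.toNNReal L * |u - v| := by
            apply mul_le_mul_of_nonneg_right _ (abs_nonneg _)
            exact Real.le_coe_toNNReal L
    exact this.continuousOn
  have hint : IntervalIntegrable f MeasureTheory.volume a b := by
    apply ContinuousOn.intervalIntegrable
    rw [Set.uIcc_of_le hab]
    exact hcont.mono hsub
  have hintsub : IntervalIntegrable (fun y => f y - f p) MeasureTheory.volume a b :=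
    hint.sub intervalIntegrable_const
  -- rewrite the difference as an integral
  have key : cellAvg m f j - f p = (m:ℝ) * ∫ y in a..b, (f y - f p) := by
    rw [intervalIntegral.integral_sub hint intervalIntegrable_const,
      intervalIntegral.integral_const, smul_eq_mul, hba]
    unfold cellAvg
    rw [← ha, ← hb]
    field_simp
  rw [key]
  have hbd1 : |∫ y in a..b, (f y - f p)| ≤ ∫ y in a..b, L * |y - p| := by
    refine (intervalIntegral.abs_integral_le_integral_abs hab).trans ?_
    apply intervalIntegral.integral_mono_on hab hintsub.abs
    · exact (continuous_const.mul ((continuous_id.sub continuous_const).abs)).intervalIntegrable a b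
    · intro y hy
      exact hlip y (hsub hy) p hp01
  have hval : (∫ y in a..b, L * |y - p|) = L * (1 / (2 * m^2)) := by
    rw [intervalIntegral.integral_const_mul]
    congr 1
    rcases hp with rfl | rfl
    · have : (∫ y in a..b, |y - a|) = ∫ y in a..b, (y - a) := by
        apply intervalIntegral.integral_congr
        intro y hy
        rw [Set.uIcc_of_le hab] at hy
        show |y - a| = y - a
        exact abs_of_nonneg (by linarith [hy.1])
      rw [this, intervalIntegral.integral_sub intervalIntegral.intervalIntegrable_id
        intervalIntegrable_const, integral_id, intervalIntegral.integral_const, smul_eq_mul]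
      have hbeq : b = a + 1 / m := by linarith
      rw [hbeq]
      field_simp
      ring
    · have : (∫ y in a..b, |y - b|) = ∫ y in a..b, (b - y) := by
        apply intervalIntegral.integral_congr
        intro y hy
        rw [Set.uIcc_of_le hab] at hy
        show |y - b| = b - y
        rw [abs_of_nonpos (by linarith [hy.2])]; ring
      rw [this, intervalIntegral.integral_sub intervalIntegrable_const
        intervalIntegral.intervalIntegrable_id, integral_id,
        intervalIntegral.integral_const, smul_eq_mul]
      have hbeq : b = a + 1 / m := by linarith
      rw [hbeq]
      field_simp
      ring
  rw [abs_mul, abs_of_nonneg hm0.le]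
  calc (m:ℝ) * |∫ y in a..b, (f y - f p)| ≤ (m:ℝ) * (L * (1 / (2 * m^2))) := by
        apply mul_le_mul_of_nonneg_left _ hm0.le
        rw [← hval]; exact hbd1
    _ = L / (2 * m) := by field_simp

/-- for Lipschitz `f`, `|Q_m f − f|_∞ ≤ (5/(2m)) Lip(f)`. -/
theorem stmt_10 (m : ℕ) (hm : 1 ≤ m) (f : ℝ → ℝ) (L : ℝ) (hL : 0 ≤ L)
    (hlip : ∀ x ∈ Set.Icc (0:ℝ) 1, ∀ y ∈ Set.Icc (0:ℝ) 1, |f x - f y| ≤ L * |x - y|) :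
    ∀ x ∈ Set.Icc (0:ℝ) 1, |Qm m f x - f x| ≤ (5 / (2 * (m : ℝ))) * L := by
  intro x hx
  have hm0 : (0:ℝ) < m := by exact_mod_cast hm
  set c : ℕ → ℝ := fun i =>
    if i = 0 then cellAvg m f 1
    else if i = m then cellAvg m f m
    else (cellAvg m f i + cellAvg m f (i + 1)) / 2 with hc
  -- rewrite Qm as a sum over range (m+1)
  have hset : Finset.range (m+1) = insert 0 (insert m (Finset.Ioo 0 m)) := by
    ext i
    simp only [Finset.mem_range, Finset.mem_insert, Finset.mem_Ioo]
    omega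
  have hQ : Qm m f x = ∑ i ∈ Finset.range (m+1), c i * hat m i x := by
    rw [hset, Finset.sum_insert (by simp [Finset.mem_Ioo]; omega),
      Finset.sum_insert (by simp [Finset.mem_Ioo])]
    have h0 : c 0 = cellAvg m f 1 := by simp [hc]
    have hmm : c m = cellAvg m f m := by
      simp only [hc]
      rw [if_neg (by omega)]; simp
    have hmid : ∀ i ∈ Finset.Ioo 0 m, c i * hat m i x
        = ((cellAvg m f i + cellAvg m f (i + 1)) / 2) * hat m i x := by
      intro i hi
      simp only [Finset.mem_Ioo] at hi
      simp only [hc]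
      rw [if_neg (by omega), if_neg (by omega)]
    rw [h0, hmm, Finset.sum_congr rfl hmid]
    unfold Qm
    ring
  -- each coefficient is close to the nodal value
  have hnode : ∀ i ∈ Finset.range (m+1), |c i - f ((i:ℝ)/m)| ≤ L / (2*m) := by
    intro i hi
    simp only [Finset.mem_range] at hi
    rcases Nat.eq_zero_or_pos i with rfl | hi0
    · have : c 0 = cellAvg m f 1 := by simp [hc]
      rw [this]
      have := avg_close m hm f L hL hlip 1 le_rfl hm ((0:ℝ)/m) (Or.inl (by push_cast; ring))
      simpa using this
    rcases eq_or_ne i m with him | him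
    · have hcm : c i = cellAvg m f m := by
        simp only [hc, him]
        rw [if_neg (by omega)]; simp
      rw [hcm, him]
      exact avg_close m hm f L hL hlip m hm le_rfl _ (Or.inr rfl)
    · have him' : i < m := by omega
      have hci : c i = (cellAvg m f i + cellAvg m f (i + 1)) / 2 := by
        simp only [hc]
        rw [if_neg (by omega), if_neg him]
      rw [hci]
      have h1 := avg_close m hm f L hL hlip i hi0 him'.le ((i:ℝ)/m) (Or.inr rfl)
      have h2 := avg_close m hm f L hL hlip (i+1) (by omega) (by omega) ((i:ℝ)/m)
        (Or.inl (by push_cast; ring))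
      calc |(cellAvg m f i + cellAvg m f (i + 1)) / 2 - f ((i:ℝ)/m)|
          = |((cellAvg m f i - f ((i:ℝ)/m)) + (cellAvg m f (i+1) - f ((i:ℝ)/m))) / 2| := by
            ring_nf
        _ ≤ (|cellAvg m f i - f ((i:ℝ)/m)| + |cellAvg m f (i+1) - f ((i:ℝ)/m)|) / 2 := by
            rw [abs_div, abs_two]
            gcongr
            exact abs_add_le _ _
        _ ≤ L / (2*m) := by linarith
  -- termwise bound
  have key : ∀ i ∈ Finset.range (m+1),
      |c i - f x| * hat m i x ≤ (5 / (2*(m:ℝ)) * L) * hat m i x := by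
    intro i hi
    rcases eq_or_lt_of_le (hat_nonneg m i x) with h0 | hpos
    · rw [← h0]; simp
    apply mul_le_mul_of_nonneg_right _ (hat_nonneg m i x)
    -- hat > 0 means |m x - i| < 1
    have habs : |(m:ℝ) * x - i| < 1 := by
      by_contra h
      push_neg at h
      rw [hat_eq_zero m i x h] at hpos
      exact lt_irrefl 0 hpos
    simp only [Finset.mem_range] at hi
    have hiM : (i:ℝ) ≤ m := by exact_mod_cast Nat.lt_succ_iff.mp hi
    have hnode01 : (i:ℝ)/m ∈ Set.Icc (0:ℝ) 1 := by
      constructor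
      · positivity
      · rw [div_le_one hm0]; exact hiM
    have hclose : |(i:ℝ)/m - x| ≤ 1/m := by
      have heq : (i:ℝ)/m - x = -(((m:ℝ) * x - i)/m) := by field_simp; ring
      rw [heq, abs_neg, abs_div, abs_of_pos hm0]
      exact (div_le_div_iff_of_pos_right hm0).mpr habs.le
    have hfx : |f ((i:ℝ)/m) - f x| ≤ L / m := by
      calc |f ((i:ℝ)/m) - f x| ≤ L * |(i:ℝ)/m - x| := hlip _ hnode01 _ hx
        _ ≤ L * (1/m) := mul_le_mul_of_nonneg_left hclose hL
        _ = L / m := by ring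
    have := hnode i (Finset.mem_range.mpr hi)
    calc |c i - f x| ≤ |c i - f ((i:ℝ)/m)| + |f ((i:ℝ)/m) - f x| := by
          have := abs_sub_le (c i) (f ((i:ℝ)/m)) (f x)
          linarith
      _ ≤ L / (2*m) + L / m := by linarith
      _ = 3 * L / (2*(m:ℝ)) := by field_simp; ring
      _ ≤ 5 * L / (2*(m:ℝ)) := by gcongr; linarith
      _ = 5 / (2*(m:ℝ)) * L := by ring
  -- assemble
  have hsum1 := hat_sum m hm x hx
  have hdiff : Qm m f x - f x = ∑ i ∈ Finset.range (m+1), (c i - f x) * hat m i x := by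
    rw [hQ, show (∑ i ∈ Finset.range (m+1), (c i - f x) * hat m i x)
        = (∑ i ∈ Finset.range (m+1), c i * hat m i x)
          - f x * ∑ i ∈ Finset.range (m+1), hat m i x by
        rw [Finset.mul_sum, ← Finset.sum_sub_distrib]
        exact Finset.sum_congr rfl fun i _ => by ring]
    rw [hsum1, mul_one]
  calc |Qm m f x - f x|
      = |∑ i ∈ Finset.range (m+1), (c i - f x) * hat m i x| := by rw [hdiff]
    _ ≤ ∑ i ∈ Finset.range (m+1), |(c i - f x) * hat m i x| :=
        Finset.abs_sum_le_sum_abs _ _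
    _ ≤ ∑ i ∈ Finset.range (m+1), (5 / (2*(m:ℝ)) * L) * hat m i x := by
        apply Finset.sum_le_sum
        intro i hi
        rw [abs_mul, abs_of_nonneg (hat_nonneg m i x)]
        exact key i hi
    _ = 5 / (2*(m:ℝ)) * L := by rw [← Finset.mul_sum, hsum1, mul_one]
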